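/- arXiv:2101.08331 — 2 statements merged into one kernel-verified Lean document; each statement's English description precedes it below -/
import Mathlib

section
/- In the setting of the abstract a posteriori estimates, define the combined error E = |||p - q||| + |||u - v|||_* + (C/λ)‖f - div v‖, where |||·||| = ‖K^{1/2} D ·‖ and |||·|||_* = ‖K^{-1/2} ·‖. If both |||p - q||| ≤ M(q,v;f) and |||u - v|||_* ≤ M(q,v;f) hold, where M(q,v;f) = |||v + K D q|||_* + (C/λ)‖f - div v‖, and u = -K D p, then M(q,v;f) ≤ E ≤ 3 M(q,v;f). -/
open scoped RealInnerProductSpace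

/-- Efficiency of the combined error: the majorant `M` satisfies `M ≤ E ≤ 3 M`
for the combined error `E = |||p - q||| + |||u - v|||_* + (C/λ)‖f - div v‖`. -/
theorem combined_error_efficiency
    {H V : Type*} [NormedAddCommGroup H] [InnerProductSpace ℝ H]
    [NormedAddCommGroup V] [InnerProductSpace ℝ V]
    (D : H →ₗ[ℝ] V) (K Khalf Kinvhalf : V →ₗ[ℝ] V)
    (hKhalf : ∀ v : V, Khalf (Khalf v) = K v)
    (hKinvhalf : ∀ v : V, Kinvhalf (Khalf v) = v)
    (hrel : ∀ r : H, ‖Khalf (D r)‖ = ‖Kinvhalf (K (D r))‖)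
    (lam C : ℝ) (hlam : 0 < lam)
    (dvg : V →ₗ[ℝ] H)
    (p q : H) (u v : V) (f : H)
    (hu : u = -(K (D p)))
    (M E : ℝ)
    (hM : M = ‖Kinvhalf (v + K (D q))‖ + (C / lam) * ‖f - dvg v‖)
    (hE : E = ‖Khalf (D (p - q))‖ + ‖Kinvhalf (u - v)‖ + (C / lam) * ‖f - dvg v‖)
    (hp_bound : ‖Khalf (D (p - q))‖ ≤ M)
    (hu_bound : ‖Kinvhalf (u - v)‖ ≤ M) :
    M ≤ E ∧ E ≤ 3 * M := by
  have hdecomp : Kinvhalf (v + K (D q)) =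
      -(Kinvhalf (u - v)) - Kinvhalf (K (D (p - q))) := by
    rw [← map_neg, ← map_sub]
    congr 1
    simp [hu, map_sub]
    abel
  have htri : ‖Kinvhalf (v + K (D q))‖ ≤
      ‖Kinvhalf (u - v)‖ + ‖Khalf (D (p - q))‖ := by
    rw [hdecomp, hrel]
    calc ‖-(Kinvhalf (u - v)) - Kinvhalf (K (D (p - q)))‖
        ≤ ‖-(Kinvhalf (u - v))‖ + ‖Kinvhalf (K (D (p - q)))‖ := norm_sub_le _ _
      _ = _ := by rw [norm_neg]
  have hR : (C / lam) * ‖f - dvg v‖ ≤ M := by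
    have : 0 ≤ ‖Kinvhalf (v + K (D q))‖ := norm_nonneg _
    linarith [hM]
  constructor
  · linarith [hM, hE]
  · linarith [hE]
end

section
/- Let H, V be real inner product spaces, D : H → V linear, and suppose integration by parts holds: ⟨div w, q⟩_H = -⟨w, D q⟩_V for all w in an admissible subspace W ⊆ V and all q ∈ H. Let p ∈ H with u := -K D p ∈ W and div u = f. Then for any q ∈ H and any v ∈ W, the error identity holds: ⟨K D(p - q), D(p - q)⟩ = ⟨-(v + K D q), D(p - q)⟩ + ⟨f - div v, p - q⟩. -/
open scoped RealInnerProductSpace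

/-- The fundamental error identity:
`⟪K D(p - q), D(p - q)⟫ = ⟪-(v + K D q), D(p - q)⟫ + ⟪f - div v, p - q⟫`. -/
theorem fundamental_error_identity
    {H V : Type*} [NormedAddCommGroup H] [InnerProductSpace ℝ H]
    [NormedAddCommGroup V] [InnerProductSpace ℝ V]
    (D : H →ₗ[ℝ] V) (K : V →ₗ[ℝ] V)
    (W : Submodule ℝ V) (dvg : V →ₗ[ℝ] H)
    (hIBP : ∀ w ∈ W, ∀ q : H, ⟪dvg w, q⟫ = -⟪w, D q⟫)
    (p : H) (u : V) (hu : u = -(K (D p))) (huW : u ∈ W)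
    (f : H) (hf : dvg u = f)
    (q : H) (v : V) (hvW : v ∈ W) :
    ⟪K (D (p - q)), D (p - q)⟫ =
      ⟪-(v + K (D q)), D (p - q)⟫ + ⟪f - dvg v, p - q⟫ := by
  have h1 : ⟪f - dvg v, p - q⟫ = -⟪u - v, D (p - q)⟫ := by
    rw [← hf, ← map_sub]
    exact hIBP (u - v) (Submodule.sub_mem W huW hvW) (p - q)
  rw [h1]
  have hK : K (D (p - q)) = -(v + K (D q)) - (u - v) := by
    rw [hu, map_sub]
    simp [map_sub, map_add, map_neg]
    abel
  rw [hK, inner_sub_left]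
  ring
end
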